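/- There exist functions γ₁ : (0,∞) → (0,∞), γ₁′ : (1,∞) → (0,∞) and γ₂ : (0,∞) → (0,∞), independent of all other data, with the following property. Let (E, λ) be a measure space, let M > 0, c > 0, let g : E → [0,∞) be measurable with ∫_E ℓ(g(x)) λ(dx) ≤ M/c², and set f := c·(g − 1). Then: (a) for every β > 0, ∫_E |f| · 1{|f| ≥ βc} dλ ≤ M γ₁(β)/c; (b) for every β > 1, ∫_E g · 1{g ≥ β} dλ ≤ M γ₁′(β)/c²; (c) for every β > 0, ∫_E f² · 1{|f| ≤ βc} dλ ≤ M γ₂(β). -/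

import Mathlib

open MeasureTheory

noncomputable def ell (r : ℝ) : ℝ := r * Real.log r - r + 1

lemma ell_sqrt {r : ℝ} (hr : 0 ≤ r) : (Real.sqrt r - 1) ^ 2 ≤ ell r := by
  set s := Real.sqrt r with hsdef
  have hs : 0 ≤ s := Real.sqrt_nonneg r
  have hr2 : s ^ 2 = r := Real.sq_sqrt hr
  rcases eq_or_lt_of_le hs with h0 | h0
  · simp [ell, ← hr2, ← h0]
  · have key : s - 1 ≤ s * Real.log s := by
      have h1 : Real.log (1 / s) ≤ 1 / s - 1 :=
        Real.log_le_sub_one_of_pos (by positivity)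
      rw [one_div, Real.log_inv] at h1
      have h2 := mul_le_mul_of_nonneg_left h1 hs
      have hs' : s ≠ 0 := ne_of_gt h0
      rw [mul_sub, mul_inv_cancel₀ hs'] at h2
      nlinarith
    have hlog : Real.log r = 2 * Real.log s := by
      rw [← hr2, Real.log_pow]; push_cast; ring
    have : ell r = 2 * s ^ 2 * Real.log s - s ^ 2 + 1 := by
      rw [ell, hlog, ← hr2]; ring
    rw [this]
    nlinarith [mul_le_mul_of_nonneg_left key hs]

lemma ell_nonneg {r : ℝ} (hr : 0 ≤ r) : 0 ≤ ell r :=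
  le_trans (sq_nonneg _) (ell_sqrt hr)

lemma sq_sqrt_add_one_le {r : ℝ} (hr : 0 ≤ r) : (Real.sqrt r + 1) ^ 2 ≤ 2 * r + 2 := by
  have hs : 0 ≤ Real.sqrt r := Real.sqrt_nonneg r
  have hr2 : Real.sqrt r ^ 2 = r := Real.sq_sqrt hr
  nlinarith [sq_nonneg (Real.sqrt r - 1)]

/-- Lemma A: on `{|r-1| ≥ β}` we have `|r-1| ≤ (4(β+1)/β) ℓ(r)`. -/
lemma lemA {r β : ℝ} (hr : 0 ≤ r) (hβ : 0 < β) (h : β ≤ |r - 1|) :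
    |r - 1| ≤ 4 * (β + 1) / β * ell r := by
  have hs : 0 ≤ Real.sqrt r := Real.sqrt_nonneg r
  have hr2 : Real.sqrt r ^ 2 = r := Real.sq_sqrt hr
  have hℓ : (Real.sqrt r - 1) ^ 2 ≤ ell r := ell_sqrt hr
  have hsq : (Real.sqrt r + 1) ^ 2 ≤ 2 * r + 2 := sq_sqrt_add_one_le hr
  have hK : (0:ℝ) < 4 * (β + 1) / β := by positivity
  rcases le_or_gt 1 r with hcase | hcase
  · -- r ≥ 1, so |r-1| = r - 1 and r ≥ 1 + β
    rw [abs_of_nonneg (by linarith)] at h ⊢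
    have hr1 : 1 + β ≤ r := by linarith
    -- (√r+1)^2 ≤ 4r ≤ K (r-1)
    have h4r : (Real.sqrt r + 1) ^ 2 ≤ 4 * r := by nlinarith
    have hKr : 4 * r ≤ 4 * (β + 1) / β * (r - 1) := by
      rw [div_mul_eq_mul_div, le_div_iff₀ hβ]; nlinarith
    -- (r-1)^2 = (√r-1)^2 (√r+1)^2 ≤ ell r * K (r-1)
    have hfac : (r - 1) ^ 2 = (Real.sqrt r - 1) ^ 2 * (Real.sqrt r + 1) ^ 2 := by
      nlinarith
    have : (r - 1) ^ 2 ≤ ell r * (4 * (β + 1) / β * (r - 1)) := by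
      rw [hfac]
      have hℓ0 := ell_nonneg hr
      calc (Real.sqrt r - 1) ^ 2 * (Real.sqrt r + 1) ^ 2
          ≤ ell r * (Real.sqrt r + 1) ^ 2 :=
            mul_le_mul_of_nonneg_right hℓ (sq_nonneg _)
        _ ≤ ell r * (4 * (β + 1) / β * (r - 1)) :=
            mul_le_mul_of_nonneg_left (le_trans h4r hKr) hℓ0
    have hrpos : 0 < r - 1 := by linarith
    nlinarith
  · -- r < 1, |r-1| = 1 - r, 1 - r ≥ β
    rw [abs_of_nonpos (by linarith)] at h ⊢
    have hβr : β ≤ 1 - r := by linarith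
    have hs1 : Real.sqrt r ≤ 1 := by nlinarith
    -- (1-r)^2 = (1-√r)^2 (1+√r)^2 ≤ ell r * 4
    have hfac : (1 - r) ^ 2 ≤ ell r * 4 := by
      have h4 : (Real.sqrt r + 1) ^ 2 ≤ 4 := by nlinarith
      have hℓ0 := ell_nonneg hr
      nlinarith [mul_le_mul_of_nonneg_right hℓ (sq_nonneg (Real.sqrt r + 1)),
        mul_le_mul_of_nonneg_left h4 hℓ0]
    have hℓ0 := ell_nonneg hr
    -- β(1-r) ≤ (1-r)^2 ≤ 4 ell r, so 1-r ≤ (4/β) ell r ≤ K ell r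
    have h1 : β * (1 - r) ≤ 4 * ell r := by nlinarith
    rw [div_mul_eq_mul_div, le_div_iff₀ hβ]
    nlinarith

/-- Lemma B: on `{r ≥ β}`, `β > 1`: `r ≤ β/(√β-1)² · ℓ(r)`. -/
lemma lemB {r β : ℝ} (hβ : 1 < β) (h : β ≤ r) :
    r ≤ β / (Real.sqrt β - 1) ^ 2 * ell r := by
  have hr : (0:ℝ) ≤ r := by linarith
  have hβ0 : (0:ℝ) ≤ β := by linarith
  have hsb : 1 < Real.sqrt β := by
    rw [show (1:ℝ) = Real.sqrt 1 by simp]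
    exact Real.sqrt_lt_sqrt (by norm_num) hβ
  have hden : (0:ℝ) < (Real.sqrt β - 1) ^ 2 := pow_pos (by linarith) 2
  have hℓ : (Real.sqrt r - 1) ^ 2 ≤ ell r := ell_sqrt hr
  have hr2 : Real.sqrt r ^ 2 = r := Real.sq_sqrt hr
  have hβ2 : Real.sqrt β ^ 2 = β := Real.sq_sqrt hβ0
  have hsr : Real.sqrt β ≤ Real.sqrt r := Real.sqrt_le_sqrt h
  -- key: (√β - 1) √r ≤ (√r - 1) √β, i.e. cross multiply
  have hkey : (Real.sqrt β - 1) * Real.sqrt r ≤ (Real.sqrt r - 1) * Real.sqrt β := by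
    nlinarith
  have hsr0 : 0 ≤ Real.sqrt r := Real.sqrt_nonneg r
  -- hence (√β-1)^2 r ≤ (√r-1)^2 β
  have h2 : (Real.sqrt β - 1) ^ 2 * r ≤ (Real.sqrt r - 1) ^ 2 * β := by
    have hl : 0 ≤ (Real.sqrt β - 1) * Real.sqrt r := mul_nonneg (by linarith) hsr0
    nlinarith [mul_le_mul hkey hkey hl (by nlinarith : 0 ≤ (Real.sqrt r - 1) * Real.sqrt β)]
  rw [div_mul_eq_mul_div, le_div_iff₀ hden]
  nlinarith [mul_le_mul_of_nonneg_left hℓ hβ0]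

/-- Lemma C: on `{|r-1| ≤ β}`: `(r-1)² ≤ 2(β+2) ℓ(r)`. -/
lemma lemC {r β : ℝ} (hr : 0 ≤ r) (hβ : 0 < β) (h : |r - 1| ≤ β) :
    (r - 1) ^ 2 ≤ 2 * (β + 2) * ell r := by
  have hℓ : (Real.sqrt r - 1) ^ 2 ≤ ell r := ell_sqrt hr
  have hℓ0 := ell_nonneg hr
  have hr2 : Real.sqrt r ^ 2 = r := Real.sq_sqrt hr
  have hsq : (Real.sqrt r + 1) ^ 2 ≤ 2 * r + 2 := sq_sqrt_add_one_le hr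
  have hrub : r ≤ 1 + β := by
    have := abs_le.mp h; linarith [this.2]
  have hfac : (r - 1) ^ 2 = (Real.sqrt r - 1) ^ 2 * (Real.sqrt r + 1) ^ 2 := by
    nlinarith
  calc (r - 1) ^ 2 = (Real.sqrt r - 1) ^ 2 * (Real.sqrt r + 1) ^ 2 := hfac
    _ ≤ ell r * (Real.sqrt r + 1) ^ 2 := mul_le_mul_of_nonneg_right hℓ (sq_nonneg _)
    _ ≤ ell r * (2 * (β + 2)) := mul_le_mul_of_nonneg_left (by linarith) hℓ0
    _ = 2 * (β + 2) * ell r := by ring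

/-- Integration plumbing. -/
lemma plumb {E : Type*} [MeasurableSpace E] (μ : Measure E) (S : Set E)
    (h ψ : E → ℝ) (K B : ℝ) (hK : 0 ≤ K) (hψ : Measurable ψ)
    (hle : ∀ x ∈ S, h x ≤ K * ψ x)
    (hint : ∫⁻ x, ENNReal.ofReal (ψ x) ∂μ ≤ ENNReal.ofReal B) :
    ∫⁻ x in S, ENNReal.ofReal (h x) ∂μ ≤ ENNReal.ofReal (K * B) := by
  calc ∫⁻ x in S, ENNReal.ofReal (h x) ∂μ
      ≤ ∫⁻ x in S, ENNReal.ofReal (K * ψ x) ∂μ :=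
        setLIntegral_mono (by measurability) fun x hx => ENNReal.ofReal_le_ofReal (hle x hx)
    _ ≤ ∫⁻ x, ENNReal.ofReal (K * ψ x) ∂μ := setLIntegral_le_lintegral _ _
    _ = ENNReal.ofReal K * ∫⁻ x, ENNReal.ofReal (ψ x) ∂μ := by
        rw [← lintegral_const_mul _ (by measurability)]
        simp_rw [← ENNReal.ofReal_mul hK]
    _ ≤ ENNReal.ofReal K * ENNReal.ofReal B := by gcongr
    _ = ENNReal.ofReal (K * B) := (ENNReal.ofReal_mul hK).symm

theorem stmt5 :
    ∃ γ₁ γ₁' γ₂ : ℝ → ℝ,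
      (∀ β : ℝ, 0 < β → 0 < γ₁ β) ∧ (∀ β : ℝ, 1 < β → 0 < γ₁' β) ∧
      (∀ β : ℝ, 0 < β → 0 < γ₂ β) ∧
      ∀ (E : Type*) (_ : MeasurableSpace E) (μ : Measure E) (M c : ℝ),
        0 < M → 0 < c →
        ∀ g : E → ℝ, Measurable g → (∀ x, 0 ≤ g x) →
        (∫⁻ x, ENNReal.ofReal (ell (g x)) ∂μ ≤ ENNReal.ofReal (M / c ^ 2)) →
        (∀ β : ℝ, 0 < β →
          ∫⁻ x in {x | β * c ≤ |c * (g x - 1)|}, ENNReal.ofReal |c * (g x - 1)| ∂μ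
            ≤ ENNReal.ofReal (M * γ₁ β / c)) ∧
        (∀ β : ℝ, 1 < β →
          ∫⁻ x in {x | β ≤ g x}, ENNReal.ofReal (g x) ∂μ
            ≤ ENNReal.ofReal (M * γ₁' β / c ^ 2)) ∧
        (∀ β : ℝ, 0 < β →
          ∫⁻ x in {x | |c * (g x - 1)| ≤ β * c}, ENNReal.ofReal ((c * (g x - 1)) ^ 2) ∂μ
            ≤ ENNReal.ofReal (M * γ₂ β)) := by
  refine ⟨fun β => 4 * (β + 1) / β, fun β => β / (Real.sqrt β - 1) ^ 2,
    fun β => 2 * (β + 2), ?_, ?_, ?_, ?_⟩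
  · intro β hβ; positivity
  · intro β hβ
    have hsb : 1 < Real.sqrt β := by
      rw [show (1:ℝ) = Real.sqrt 1 by simp]
      exact Real.sqrt_lt_sqrt (by norm_num) hβ
    have hb : (0:ℝ) < β := by linarith
    exact div_pos hb (pow_pos (by linarith) 2)
  · intro β hβ; positivity
  intro E _ μ M c hM hc g hg hg0 hint
  have hMeas : Measurable (fun x => ell (g x)) := by
    unfold ell
    exact ((hg.mul (Real.measurable_log.comp hg)).sub hg).add measurable_const
  refine ⟨?_, ?_, ?_⟩
  · intro β hβ
    have hK : (0:ℝ) ≤ c * (4 * (β + 1) / β) := by positivity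
    have := plumb μ {x | β * c ≤ |c * (g x - 1)|} (fun x => |c * (g x - 1)|)
      (fun x => ell (g x)) (c * (4 * (β + 1) / β)) (M / c ^ 2) hK hMeas
      (fun x hx => by
        show |c * (g x - 1)| ≤ c * (4 * (β + 1) / β) * ell (g x)
        have hx' : β * c ≤ |c * (g x - 1)| := hx
        rw [abs_mul, abs_of_pos hc] at hx' ⊢
        have hβg : β ≤ |g x - 1| := by
          have := (mul_le_mul_iff_of_pos_right hc).mp (by linarith [hx'] : β * c ≤ |g x - 1| * c)
          linarith
        have := lemA (hg0 x) hβ hβg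
        calc c * |g x - 1| ≤ c * (4 * (β + 1) / β * ell (g x)) := by
              exact mul_le_mul_of_nonneg_left this hc.le
          _ = c * (4 * (β + 1) / β) * ell (g x) := by ring) hint
    convert this using 2
    field_simp
  · intro β hβ
    have hsb : 1 < Real.sqrt β := by
      rw [show (1:ℝ) = Real.sqrt 1 by simp]
      exact Real.sqrt_lt_sqrt (by norm_num) hβ
    have hK : (0:ℝ) ≤ β / (Real.sqrt β - 1) ^ 2 := by positivity
    have := plumb μ {x | β ≤ g x} (fun x => g x) (fun x => ell (g x))
      (β / (Real.sqrt β - 1) ^ 2) (M / c ^ 2) hK hMeas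
      (fun x hx => lemB hβ hx) hint
    convert this using 2
    field_simp
  · intro β hβ
    have hK : (0:ℝ) ≤ c ^ 2 * (2 * (β + 2)) := by positivity
    have := plumb μ {x | |c * (g x - 1)| ≤ β * c} (fun x => (c * (g x - 1)) ^ 2)
      (fun x => ell (g x)) (c ^ 2 * (2 * (β + 2))) (M / c ^ 2) hK hMeas
      (fun x hx => by
        show (c * (g x - 1)) ^ 2 ≤ c ^ 2 * (2 * (β + 2)) * ell (g x)
        have hx' : |c * (g x - 1)| ≤ β * c := hx
        rw [abs_mul, abs_of_pos hc] at hx'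
        have hβg : |g x - 1| ≤ β := by
          have := (mul_le_mul_iff_of_pos_right hc).mp (by linarith [hx'] : |g x - 1| * c ≤ β * c)
          linarith
        have := lemC (hg0 x) hβ hβg
        calc (c * (g x - 1)) ^ 2 = c ^ 2 * (g x - 1) ^ 2 := by ring
          _ ≤ c ^ 2 * (2 * (β + 2) * ell (g x)) :=
              mul_le_mul_of_nonneg_left this (by positivity)
          _ = c ^ 2 * (2 * (β + 2)) * ell (g x) := by ring) hint
    convert this using 2
    field_simp
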